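/- (Key Lemma) Let K be a polyring, F a term in n variables of degree m, and a⃗₀,…,a⃗_m ∈ Kⁿ. If F(b⃗) = 0 for every b⃗ in FS(a⃗ᵢ)_{i≤m} (the set of all sums Σ_{i∈S} a⃗ᵢ over nonempty S ⊆ {0,…,m}, with coordinatewise addition), then F(0⃗) = 0. -/
import Mathlib


/-- Terms over a polyring signature: variables, constants from `K` (including
`0`), addition, and extra operations indexed by `ι` with arities `ar`. -/
inductive PTerm (K ι : Type) (ar : ι → ℕ) (n : ℕ) : Type
  | var : Fin n → PTerm K ι ar n
  | const : K → PTerm K ι ar n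
  | add : PTerm K ι ar n → PTerm K ι ar n → PTerm K ι ar n
  | op (i : ι) : (Fin (ar i) → PTerm K ι ar n) → PTerm K ι ar n

variable {K ι : Type} {ar : ι → ℕ} {n : ℕ}

/-- Evaluation of a term at a point of `Kⁿ`. -/
def PTerm.eval [AddCommGroup K] (ops : ∀ i, (Fin (ar i) → K) → K) :
    PTerm K ι ar n → (Fin n → K) → K
  | .var j, a => a j
  | .const c, _ => c
  | .add s t, a => s.eval ops a + t.eval ops a
  | .op i ts, a => ops i fun j => (ts j).eval ops a

/-- A monomial is a term not containing `+`. -/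
def PTerm.IsMonomial : PTerm K ι ar n → Prop
  | .var _ => True
  | .const _ => True
  | .add _ _ => False
  | .op _ ts => ∀ j, (ts j).IsMonomial

/-- A polynomial is a finite sum of monomials. -/
def PTerm.IsPolynomial : PTerm K ι ar n → Prop
  | .add s t => s.IsPolynomial ∧ t.IsPolynomial
  | t => t.IsMonomial

/-- Degree bookkeeping: the number of occurrences of variables from `V` in a
monomial, extended to sums by taking the maximum of the summands (so on
polynomials this computes the degree w.r.t. `V`). -/
def PTerm.occ : PTerm K ι ar n → Finset (Fin n) → ℕ
  | .var j, V => if j ∈ V then 1 else 0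
  | .const _, _ => 0
  | .add s t, V => max (s.occ V) (t.occ V)
  | .op _ ts, V => ∑ j, (ts j).occ V

/-- The degree of a term w.r.t. a set `V` of variables: the minimal degree
w.r.t. `V` of a polynomial representing (inducing the same function as) it. -/
noncomputable def PTerm.degree [AddCommGroup K] (ops : ∀ i, (Fin (ar i) → K) → K)
    (F : PTerm K ι ar n) (V : Finset (Fin n)) : ℕ :=
  sInf {d | ∃ P : PTerm K ι ar n, P.IsPolynomial ∧
    (∀ a, P.eval ops a = F.eval ops a) ∧ P.occ V ≤ d}

/-- The polyring condition: each extra operation is distributive w.r.t. `+`,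
i.e. additive in every argument. -/
def IsPolyring [AddCommGroup K] (ops : ∀ i, (Fin (ar i) → K) → K) : Prop :=
  ∀ (i : ι) (j : Fin (ar i)) (a : Fin (ar i) → K) (x y : K),
    ops i (Function.update a j (x + y)) =
      ops i (Function.update a j x) + ops i (Function.update a j y)

/-- The Zariski topology on `Kⁿ`: root sets of terms form a closed subbase,
so the closed sets are the intersections of finite unions of root sets. -/
def zariskiTopology [AddCommGroup K] (ops : ∀ i, (Fin (ar i) → K) → K) (n : ℕ) :
    TopologicalSpace (Fin n → K) :=
  TopologicalSpace.generateFrom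
    {U | ∃ F : PTerm K ι ar n, U = {a | F.eval ops a = 0}ᶜ}


section KeyLemmaAux

variable [AddCommGroup K]

/-- `PD d f`: `f` is a polynomial map of degree at most `d` (all `(d+1)`-fold
finite differences vanish). -/
def PD : ℕ → ((Fin n → K) → K) → Prop
  | 0, f => ∀ x y, f (x + y) = f x
  | d + 1, f => ∀ a, PD d (fun x => f (x + a) - f x)

lemma PD_congr {d : ℕ} {f g : (Fin n → K) → K} (h : ∀ x, f x = g x) (hf : PD d f) :
    PD d g := by
  have : f = g := funext h
  exact this ▸ hf

lemma PD_zero : ∀ d : ℕ, PD (n := n) d (fun _ => (0 : K))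
  | 0 => fun _ _ => rfl
  | d + 1 => fun _ => PD_congr (fun x => by simp) (PD_zero d)

lemma PD_succ_of {d : ℕ} {f : (Fin n → K) → K} (hf : PD d f) : PD (d + 1) f := by
  induction d generalizing f with
  | zero =>
    intro a x y
    show f (x + y + a) - f (x + y) = f (x + a) - f x
    rw [add_assoc, hf x (y + a), hf x y, hf x a]
  | succ d ih => exact fun a => ih (hf a)

lemma PD_mono {d e : ℕ} (hde : d ≤ e) {f : (Fin n → K) → K} (hf : PD d f) : PD e f := by
  induction e with
  | zero => exact (Nat.le_zero.mp hde) ▸ hf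
  | succ e ih =>
    rcases Nat.lt_or_ge d (e + 1) with hlt | hge
    · exact PD_succ_of (ih (Nat.lt_succ_iff.mp hlt))
    · exact (Nat.le_antisymm hde hge) ▸ hf

lemma PD_add {d : ℕ} {f g : (Fin n → K) → K} (hf : PD d f) (hg : PD d g) :
    PD d (fun x => f x + g x) := by
  induction d generalizing f g with
  | zero =>
    intro x y
    show f (x + y) + g (x + y) = f x + g x
    rw [hf, hg]
  | succ d ih =>
    intro a
    refine PD_congr (fun x => ?_) (ih (hf a) (hg a))
    show f (x + a) - f x + (g (x + a) - g x) = f (x + a) + g (x + a) - (f x + g x)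
    abel

lemma PD_sum {d : ℕ} {α : Type} (T : Finset α) (F : α → (Fin n → K) → K)
    (hF : ∀ s ∈ T, PD d (F s)) : PD d (fun x => ∑ s ∈ T, F s x) := by
  have : PD d (∑ s ∈ T, F s) :=
    Finset.sum_induction F (PD d)
      (fun f g hf hg => PD_congr (fun x => rfl) (PD_add hf hg))
      (PD_congr (fun x => rfl) (PD_zero d)) hF
  exact PD_congr (fun x => by simp) this

lemma PD_delta {d : ℕ} {f : (Fin n → K) → K} (hf : PD d f) (a : Fin n → K) :
    PD d (fun x => f (x + a) - f x) := by
  cases d with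
  | zero =>
    intro x y
    show f (x + y + a) - f (x + y) = f (x + a) - f x
    rw [add_assoc, hf x (y + a), hf x y, hf x a]
  | succ d => exact PD_succ_of (hf a)

variable {ops : ∀ i, (Fin (ar i) → K) → K}

lemma ops_eq_zero (hpoly : IsPolyring ops) (i : ι) (g : Fin (ar i) → K) (j : Fin (ar i))
    (hj : g j = 0) : ops i g = 0 := by
  have h1 : Function.update g j ((0 : K) + 0) = g := by
    rw [add_zero, ← hj, Function.update_eq_self]
  have h2 : Function.update g j (0 : K) = g := by rw [← hj, Function.update_eq_self]
  have := hpoly i j g 0 0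
  rw [h1, h2] at this
  exact left_eq_add.mp this

lemma ops_expand (hpoly : IsPolyring ops) (i : ι) (h : Fin (ar i) → K) :
    ∀ (T : Finset (Fin (ar i))) (g : Fin (ar i) → K),
      ops i (fun j => if j ∈ T then g j + h j else g j) =
        ∑ S ∈ T.powerset, ops i (fun j => if j ∈ S then h j else g j) := by
  intro T
  induction T using Finset.induction_on with
  | empty => intro g; simp
  | @insert t T ht ih =>
    intro g
    have base : (fun j => if j ∈ insert t T then g j + h j else g j)
        = Function.update (fun j => if j ∈ T then g j + h j else g j) t (g t + h t) := by
      funext j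
      rcases eq_or_ne j t with rfl | hj
      · simp [ht]
      · simp [Function.update_of_ne hj, hj]
    rw [base, hpoly i t _ (g t) (h t)]
    have e1 : Function.update (fun j => if j ∈ T then g j + h j else g j) t (g t)
        = fun j => if j ∈ T then g j + h j else g j := by
      funext j
      rcases eq_or_ne j t with rfl | hj
      · simp [ht]
      · simp [Function.update_of_ne hj]
    have e2 : Function.update (fun j => if j ∈ T then g j + h j else g j) t (h t)
        = fun j => if j ∈ T then (Function.update g t (h t)) j + h j
            else (Function.update g t (h t)) j := by
      funext j
      rcases eq_or_ne j t with rfl | hj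
      · simp [ht]
      · simp [Function.update_of_ne hj]
    rw [e1, e2, ih, ih, Finset.sum_powerset_insert ht]
    congr 1
    refine Finset.sum_congr rfl fun S hS => ?_
    have htS : t ∉ S := fun hts => ht (Finset.mem_powerset.mp hS hts)
    congr 1
    funext j
    rcases eq_or_ne j t with rfl | hj
    · simp [htS]
    · simp [Function.update_of_ne hj, hj]

lemma PD_ops (hpoly : IsPolyring ops) (i : ι) :
    ∀ (D : ℕ) (d : Fin (ar i) → ℕ) (f : Fin (ar i) → (Fin n → K) → K),
      (∀ j, PD (d j) (f j)) → (∑ j, d j) ≤ D →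
      PD D (fun x => ops i fun j => f j x) := by
  intro D
  induction D with
  | zero =>
    intro d f hf hsum x y
    have hd : ∀ j, d j = 0 := by
      intro j
      have := Finset.single_le_sum (f := d) (fun j _ => Nat.zero_le _) (Finset.mem_univ j)
      omega
    show ops i (fun j => f j (x + y)) = ops i (fun j => f j x)
    congr 1
    funext j
    exact (hd j ▸ hf j : PD 0 (f j)) x y
  | succ D ih =>
    intro d f hf hsum a
    have key : ∀ x, ops i (fun j => f j (x + a)) - ops i (fun j => f j x)
        = ∑ S ∈ ((Finset.univ : Finset (Fin (ar i))).powerset).erase ∅,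
            ops i (fun j => if j ∈ S then f j (x + a) - f j x else f j x) := by
      intro x
      have expand := ops_expand hpoly i (fun j => f j (x + a) - f j x)
        Finset.univ (fun j => f j x)
      have lhs1 : (fun j => if j ∈ (Finset.univ : Finset (Fin (ar i)))
            then f j x + (f j (x + a) - f j x) else f j x) = fun j => f j (x + a) := by
        funext j; simp
      rw [lhs1] at expand
      rw [expand, ← Finset.add_sum_erase _ _
        (Finset.empty_mem_powerset (Finset.univ : Finset (Fin (ar i))))]
      have hemp : (fun j => if j ∈ (∅ : Finset (Fin (ar i)))
          then f j (x + a) - f j x else f j x) = (fun j => f j x) := by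
        funext j; simp
      rw [hemp]
      abel
    refine PD_congr (fun x => (key x).symm) (PD_sum _ _ fun S hS => ?_)
    have hSne : S.Nonempty := by
      rw [Finset.mem_erase] at hS
      exact Finset.nonempty_iff_ne_empty.mpr hS.1
    obtain ⟨j₀, hj₀⟩ := hSne
    by_cases hd0 : d j₀ = 0
    · have hz : ∀ x, f j₀ (x + a) - f j₀ x = 0 := by
        intro x
        have h0 : PD 0 (f j₀) := hd0 ▸ hf j₀
        rw [h0 x a, sub_self]
      refine PD_congr (fun x => ?_) (PD_zero D)
      exact (ops_eq_zero hpoly i _ j₀ (by simp [hj₀, hz x])).symm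
    · obtain ⟨d₀, hd₀⟩ := Nat.exists_eq_succ_of_ne_zero hd0
      have hcomp : ∀ j, PD (Function.update d j₀ d₀ j)
          (fun x => if j ∈ S then f j (x + a) - f j x else f j x) := by
        intro j
        rcases eq_or_ne j j₀ with rfl | hj
        · rw [Function.update_self]
          have h1 := hf j
          rw [hd₀] at h1
          exact PD_congr (fun x => by rw [if_pos hj₀]) (h1 a)
        · rw [Function.update_of_ne hj]
          by_cases hjS : j ∈ S
          · exact PD_congr (fun x => by rw [if_pos hjS]) (PD_delta (hf j) a)
          · exact PD_congr (fun x => by rw [if_neg hjS]) (hf j)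
      have hsum' : (∑ j, Function.update d j₀ d₀ j) ≤ D := by
        rw [Finset.sum_update_of_mem (Finset.mem_univ j₀), Finset.sdiff_singleton_eq_erase]
        have h1 : ∑ j, d j = d j₀ + ∑ j ∈ Finset.univ.erase j₀, d j :=
          (Finset.add_sum_erase _ _ (Finset.mem_univ j₀)).symm
        omega
      exact ih (Function.update d j₀ d₀) _ hcomp hsum'

lemma isPolynomial_of_isMonomial : ∀ {t : PTerm K ι ar n},
    t.IsMonomial → t.IsPolynomial := by
  intro t ht
  cases t with
  | var j => trivial
  | const c => trivial
  | add s u => exact ht.elim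
  | op i ts => exact ht

lemma PD_eval (hpoly : IsPolyring ops) :
    ∀ P : PTerm K ι ar n, P.IsPolynomial → PD (P.occ Finset.univ) (P.eval ops) := by
  intro P
  induction P with
  | var j =>
    intro _
    have hocc : (PTerm.var j : PTerm K ι ar n).occ Finset.univ = 1 := by
      simp [PTerm.occ]
    rw [hocc]
    intro b x y
    show (x + y + b) j - (x + y) j = (x + b) j - x j
    simp only [Pi.add_apply]
    abel
  | const c => intro _ x y; rfl
  | add s t ihs iht =>
    intro hP
    have hs := ihs hP.1
    have ht := iht hP.2
    exact PD_add (PD_mono (le_max_left _ _) hs) (PD_mono (le_max_right _ _) ht)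
  | op i ts ih =>
    intro hP
    exact PD_ops hpoly i _ (fun j => (ts j).occ Finset.univ) (fun j => (ts j).eval ops)
      (fun j => ih j (isPolynomial_of_isMonomial (hP j))) (le_refl _)

lemma PD_altsum {q : ℕ} (av : Fin q → Fin n → K) :
    ∀ (d : ℕ) (f : (Fin n → K) → K), PD d f → ∀ T : Finset (Fin q), d < T.card → ∀ x,
      ∑ S ∈ T.powerset, ((-1 : ℤ) ^ S.card) • f (x + ∑ i ∈ S, av i) = 0 := by
  intro d
  induction d with
  | zero =>
    intro f hf T hT x
    have hc : ∀ S ∈ T.powerset, ((-1 : ℤ) ^ S.card) • f (x + ∑ i ∈ S, av i)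
        = ((-1 : ℤ) ^ S.card) • f x := by
      intro S _
      rw [hf x _]
    rw [Finset.sum_congr rfl hc, ← Finset.sum_smul,
      Finset.sum_powerset_neg_one_pow_card_of_nonempty (Finset.card_pos.mp hT), zero_smul]
  | succ d ih =>
    intro f hf T hT x
    obtain ⟨t, htT⟩ := Finset.card_pos.mp (Nat.lt_of_le_of_lt (Nat.zero_le _) hT)
    have hTT : T = insert t (T.erase t) := (Finset.insert_erase htT).symm
    have htT' : t ∉ T.erase t := Finset.notMem_erase t T
    have hcard : d < (T.erase t).card := by
      have := Finset.card_erase_of_mem htT; omega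
    rw [hTT, Finset.sum_powerset_insert htT', ← Finset.sum_add_distrib]
    have hstep : ∀ S ∈ (T.erase t).powerset,
        ((-1 : ℤ) ^ S.card) • f (x + ∑ i ∈ S, av i)
          + ((-1 : ℤ) ^ (insert t S).card) • f (x + ∑ i ∈ insert t S, av i)
        = -(((-1 : ℤ) ^ S.card) •
            ((fun y => f (y + av t) - f y) (x + ∑ i ∈ S, av i))) := by
      intro S hS
      have htS : t ∉ S := fun hts => htT' (Finset.mem_powerset.mp hS hts)
      rw [Finset.card_insert_of_notMem htS, Finset.sum_insert htS]
      have hre : x + (av t + ∑ i ∈ S, av i) = x + ∑ i ∈ S, av i + av t := by abel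
      rw [hre]
      show _ = -(((-1 : ℤ) ^ S.card) • (f (x + ∑ i ∈ S, av i + av t) - f (x + ∑ i ∈ S, av i)))
      rw [pow_succ, mul_neg_one, neg_smul, smul_sub, neg_sub, ← sub_eq_add_neg]
    rw [Finset.sum_congr rfl hstep, Finset.sum_neg_distrib,
      ih _ (hf (av t)) _ hcard x, neg_zero]

def PTerm.addCount : PTerm K ι ar n → ℕ
  | .add s t => s.addCount + t.addCount + 1
  | .op _ ts => ∑ j, (ts j).addCount
  | _ => 0

lemma exists_add_of_not_isMonomial {t : PTerm K ι ar n} (h1 : ¬ t.IsMonomial)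
    (h2 : t.IsPolynomial) : ∃ s u, t = PTerm.add s u := by
  cases t with
  | add s u => exact ⟨s, u, rfl⟩
  | var j => exact absurd trivial h1
  | const c => exact absurd trivial h1
  | op i ts => exact absurd h2 h1

lemma exists_poly_op (hpoly : IsPolyring ops) (i : ι) :
    ∀ (N : ℕ) (g : Fin (ar i) → PTerm K ι ar n), (∑ j, (g j).addCount) ≤ N →
      (∀ j, (g j).IsPolynomial) →
      ∃ P : PTerm K ι ar n, P.IsPolynomial ∧
        ∀ a, P.eval ops a = ops i fun j => (g j).eval ops a := by
  intro N
  induction N using Nat.strong_induction_on with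
  | _ N ihN =>
  intro g hsum hg
  by_cases hmon : ∀ j, (g j).IsMonomial
  · exact ⟨.op i g, hmon, fun a => rfl⟩
  · push_neg at hmon
    obtain ⟨j₀, hj₀⟩ := hmon
    obtain ⟨s, t, hst⟩ := exists_add_of_not_isMonomial hj₀ (hg j₀)
    have hpst := hg j₀
    rw [hst] at hpst
    obtain ⟨hs, ht⟩ := hpst
    have hkey : ∀ u : PTerm K ι ar n, u.IsPolynomial → u.addCount < (g j₀).addCount →
        ∃ P : PTerm K ι ar n, P.IsPolynomial ∧
          ∀ a, P.eval ops a = ops i fun j => ((Function.update g j₀ u) j).eval ops a := by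
      intro u hu hcount
      have h1 : ∑ j, (g j).addCount
          = (g j₀).addCount + ∑ j ∈ Finset.univ.erase j₀, (g j).addCount :=
        (Finset.add_sum_erase _ _ (Finset.mem_univ j₀)).symm
      have hsum' : (∑ j, ((Function.update g j₀ u) j).addCount) < N := by
        have e1 : ∑ j, ((Function.update g j₀ u) j).addCount
            = u.addCount + ∑ j ∈ Finset.univ.erase j₀, (g j).addCount := by
          rw [← Finset.add_sum_erase _ _ (Finset.mem_univ j₀), Function.update_self]
          congr 1
          refine Finset.sum_congr rfl fun j hj => ?_
          rw [Function.update_of_ne (Finset.ne_of_mem_erase hj)]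
        omega
      refine ihN _ hsum' _ (le_refl _) fun j => ?_
      rcases eq_or_ne j j₀ with rfl | hj
      · rwa [Function.update_self]
      · rw [Function.update_of_ne hj]; exact hg j
    have hcs : s.addCount < (g j₀).addCount := by
      rw [hst]; show _ < s.addCount + t.addCount + 1; omega
    have hct : t.addCount < (g j₀).addCount := by
      rw [hst]; show _ < s.addCount + t.addCount + 1; omega
    obtain ⟨P₁, hP₁, hP₁e⟩ := hkey s hs hcs
    obtain ⟨P₂, hP₂, hP₂e⟩ := hkey t ht hct
    refine ⟨.add P₁ P₂, ⟨hP₁, hP₂⟩, fun a => ?_⟩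
    show P₁.eval ops a + P₂.eval ops a = _
    rw [hP₁e a, hP₂e a]
    have e1 : (fun j => ((Function.update g j₀ s) j).eval ops a)
        = Function.update (fun j => (g j).eval ops a) j₀ (s.eval ops a) := by
      funext j
      rcases eq_or_ne j j₀ with rfl | hj
      · rw [Function.update_self, Function.update_self]
      · rw [Function.update_of_ne hj, Function.update_of_ne hj]
    have e2 : (fun j => ((Function.update g j₀ t) j).eval ops a)
        = Function.update (fun j => (g j).eval ops a) j₀ (t.eval ops a) := by
      funext j
      rcases eq_or_ne j j₀ with rfl | hj
      · rw [Function.update_self, Function.update_self]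
      · rw [Function.update_of_ne hj, Function.update_of_ne hj]
    have e0 : (fun j => (g j).eval ops a)
        = Function.update (fun j => (g j).eval ops a) j₀ (s.eval ops a + t.eval ops a) := by
      funext j
      rcases eq_or_ne j j₀ with rfl | hj
      · rw [Function.update_self, hst]; rfl
      · rw [Function.update_of_ne hj]
    rw [e1, e2]
    conv_rhs => rw [e0]
    exact (hpoly i j₀ _ (s.eval ops a) (t.eval ops a)).symm

lemma exists_poly (hpoly : IsPolyring ops) (F : PTerm K ι ar n) :
    ∃ P : PTerm K ι ar n, P.IsPolynomial ∧ ∀ a, P.eval ops a = F.eval ops a := by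
  induction F with
  | var j => exact ⟨.var j, trivial, fun a => rfl⟩
  | const c => exact ⟨.const c, trivial, fun a => rfl⟩
  | add s t ihs iht =>
    obtain ⟨P₁, h₁, e₁⟩ := ihs
    obtain ⟨P₂, h₂, e₂⟩ := iht
    refine ⟨.add P₁ P₂, ⟨h₁, h₂⟩, fun a => ?_⟩
    show P₁.eval ops a + P₂.eval ops a = _
    rw [e₁, e₂]; rfl
  | op i ts ih =>
    choose P hP hPe using ih
    obtain ⟨Q, hQ, hQe⟩ := exists_poly_op hpoly i (∑ j, (P j).addCount) P (le_refl _) hP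
    refine ⟨Q, hQ, fun a => ?_⟩
    rw [hQe a]
    show ops i (fun j => (P j).eval ops a) = ops i (fun j => (ts j).eval ops a)
    congr 1
    funext j
    exact hPe j a

end KeyLemmaAux

/-- The Key Lemma: if `F` is a term of degree `m` over a polyring and `F`
vanishes on all nonempty subset sums of `m + 1` vectors `a⃗₀, …, a⃗_m ∈ Kⁿ`,
then `F(0⃗) = 0`. -/
theorem stmt_16 (K ι : Type) [AddCommGroup K] (ar : ι → ℕ)
    (ops : ∀ i, (Fin (ar i) → K) → K) (hpoly : IsPolyring ops)
    (n m : ℕ) (F : PTerm K ι ar n) (hdeg : F.degree ops Finset.univ = m)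
    (a : Fin (m + 1) → Fin n → K)
    (h : ∀ S : Finset (Fin (m + 1)), S.Nonempty → F.eval ops (∑ i ∈ S, a i) = 0) :
    F.eval ops 0 = 0 := by
  have hne : {d | ∃ P : PTerm K ι ar n, P.IsPolynomial ∧
      (∀ a, P.eval ops a = F.eval ops a) ∧ P.occ Finset.univ ≤ d}.Nonempty := by
    obtain ⟨P, hP, hPe⟩ := exists_poly hpoly F
    exact ⟨P.occ Finset.univ, P, hP, hPe, le_refl _⟩
  have hmem := Nat.sInf_mem hne
  have hdeg' : sInf {d | ∃ P : PTerm K ι ar n, P.IsPolynomial ∧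
      (∀ a, P.eval ops a = F.eval ops a) ∧ P.occ Finset.univ ≤ d} = m := hdeg
  rw [hdeg'] at hmem
  obtain ⟨Q, hQ, hQe, hQocc⟩ := hmem
  have hPD : PD m (Q.eval ops) := PD_mono hQocc (PD_eval hpoly Q hQ)
  have halt := PD_altsum a m (Q.eval ops) hPD Finset.univ (by simp) 0
  rw [Finset.sum_eq_single_of_mem ∅
    (Finset.empty_mem_powerset (Finset.univ : Finset (Fin (m + 1))))
    (fun S _ hSne => by
      have hne' : S.Nonempty := Finset.nonempty_iff_ne_empty.mpr hSne
      rw [zero_add, hQe, h S hne', smul_zero])] at halt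
  rw [← hQe 0]
  simpa using halt
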